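/- Let D ⊆ ℝᵈ be nonempty and C = {λ v : v ∈ conv(D), λ ≥ 0}. The following are equivalent: (i) for every H ∈ ℝᵈ, if H·y ≥ 0 for all y ∈ D then H·y = 0 for all y ∈ D; (ii) 0 ∈ ri(C), the relative interior of the cone C. -/

import Mathlib

open Set Metric

variable {E : Type*} [NormedAddCommGroup E] [NormedSpace ℝ E]

lemma mem_intrinsicInterior_iff_ball {s : Set E} {x : E} :
    x ∈ intrinsicInterior ℝ s ↔
      x ∈ affineSpan ℝ s ∧ ∃ ε > 0, Metric.ball x ε ∩ (affineSpan ℝ s : Set E) ⊆ s := by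
  rw [mem_intrinsicInterior]
  constructor
  · rintro ⟨y, hy, rfl⟩
    refine ⟨y.2, ?_⟩
    rw [mem_interior_iff_mem_nhds, nhds_subtype_eq_comap, Filter.mem_comap] at hy
    obtain ⟨T, hT, hTs⟩ := hy
    obtain ⟨ε, hε, hball⟩ := Metric.mem_nhds_iff.1 hT
    exact ⟨ε, hε, fun p hp => hTs (show ((⟨p, hp.2⟩ : affineSpan ℝ s) : E) ∈ T from hball hp.1)⟩
  · rintro ⟨hxA, ε, hε, hsub⟩
    refine ⟨⟨x, hxA⟩, ?_, rfl⟩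
    rw [mem_interior_iff_mem_nhds, nhds_subtype_eq_comap, Filter.mem_comap]
    exact ⟨Metric.ball x ε, Metric.ball_mem_nhds _ hε, fun y hy => hsub ⟨hy, y.2⟩⟩

theorem stmt2 {d : ℕ} (D : Set (EuclideanSpace ℝ (Fin d))) (hD : D.Nonempty)
    (C : Set (EuclideanSpace ℝ (Fin d)))
    (hC : C = {y | ∃ v ∈ convexHull ℝ D, ∃ l : ℝ, 0 ≤ l ∧ y = l • v}) :
    (∀ H : EuclideanSpace ℝ (Fin d),
        (∀ y ∈ D, 0 ≤ (inner ℝ H y : ℝ)) → ∀ y ∈ D, (inner ℝ H y : ℝ) = 0) ↔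
      (0 : EuclideanSpace ℝ (Fin d)) ∈ intrinsicInterior ℝ C := by
  obtain ⟨y₀, hy₀⟩ := hD
  -- basic facts about C
  have hDsub : D ⊆ C := by
    intro y hy
    exact hC ▸ ⟨y, subset_convexHull ℝ D hy, 1, zero_le_one, (one_smul ℝ y).symm⟩
  have h0C : (0 : EuclideanSpace ℝ (Fin d)) ∈ C :=
    hC ▸ ⟨y₀, subset_convexHull ℝ D hy₀, 0, le_refl 0, (zero_smul ℝ y₀).symm⟩
  have hcone : ∀ t : ℝ, 0 ≤ t → ∀ y ∈ C, t • y ∈ C := by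
    intro t ht y hy
    rw [hC] at hy ⊢
    obtain ⟨v, hv, l, hl, rfl⟩ := hy
    exact ⟨v, hv, t * l, mul_nonneg ht hl, (mul_smul t l v).symm⟩
  have hconv : Convex ℝ C := by
    rw [hC]
    rintro x ⟨v₁, hv₁, l₁, hl₁, rfl⟩ y ⟨v₂, hv₂, l₂, hl₂, rfl⟩ a b ha hb hab
    rcases eq_or_lt_of_le (add_nonneg (mul_nonneg ha hl₁) (mul_nonneg hb hl₂)) with hm | hm
    · have h1 : a * l₁ = 0 := by nlinarith
      have h2 : b * l₂ = 0 := by nlinarith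
      refine ⟨v₁, hv₁, 0, le_refl 0, ?_⟩
      simp [smul_smul, h1, h2]
    · set m := a * l₁ + b * l₂
      refine ⟨(a * l₁ / m) • v₁ + (b * l₂ / m) • v₂,
        (convex_convexHull ℝ D) hv₁ hv₂ (by positivity) (by positivity)
          (by field_simp; rfl), m, le_of_lt hm, ?_⟩
      rw [smul_add, smul_smul, smul_smul, smul_smul, smul_smul]
      rw [mul_div_cancel₀ _ (ne_of_gt hm), mul_div_cancel₀ _ (ne_of_gt hm)]
  have h0A : (0 : EuclideanSpace ℝ (Fin d)) ∈ affineSpan ℝ C := subset_affineSpan ℝ C h0C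
  constructor
  · -- no-arbitrage → 0 ∈ ri C
    intro hNA
    -- Step 1: ∀ y ∈ C, -y ∈ closure C
    have hneg : ∀ y ∈ C, -y ∈ closure C := by
      intro y hyC
      by_contra hnot
      obtain ⟨f, u, hfu, hub⟩ := geometric_hahn_banach_point_closed
        hconv.closure isClosed_closure hnot
      have hu0 : u < 0 := by simpa using hub 0 (subset_closure h0C)
      -- f is nonneg on D
      have hfD : ∀ y' ∈ D, 0 ≤ f y' := by
        intro y' hy'
        by_contra hlt
        push_neg at hlt
        have ht : (0:ℝ) ≤ (u - 1) / f y' :=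
          le_of_lt (div_pos_of_neg_of_neg (by linarith) hlt)
        have := hub (((u - 1) / f y') • y')
          (subset_closure (hcone _ ht y' (hDsub hy')))
        rw [map_smul, smul_eq_mul, div_mul_cancel₀ _ (ne_of_lt hlt)] at this
        linarith
      -- transfer to inner and apply no-arbitrage
      set H := (InnerProductSpace.toDual ℝ (EuclideanSpace ℝ (Fin d))).symm f with hH
      have hHf : ∀ x : EuclideanSpace ℝ (Fin d), (inner ℝ H x : ℝ) = f x := fun x =>
        InnerProductSpace.toDual_symm_apply
      have hzero : ∀ y' ∈ D, f y' = 0 := by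
        intro y' hy'
        rw [← hHf]
        exact hNA H (fun z hz => (hHf z) ▸ hfD z hz) y' hy'
      -- f vanishes on conv D, hence on C
      have hconvzero : convexHull ℝ D ⊆ {x : EuclideanSpace ℝ (Fin d) | f x = 0} := by
        apply convexHull_min
        · exact hzero
        · have : {x : EuclideanSpace ℝ (Fin d) | f x = 0} =
              {x : EuclideanSpace ℝ (Fin d) | f x ≤ 0} ∩
                {x : EuclideanSpace ℝ (Fin d) | 0 ≤ f x} := by
            ext x; simp [le_antisymm_iff]
          rw [this]
          exact (convex_halfSpace_le (f.toLinearMap.isLinear) 0).inter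
            (convex_halfSpace_ge (f.toLinearMap.isLinear) 0)
      have hfy : f y = 0 := by
        rw [hC] at hyC
        obtain ⟨v, hv, l, hl, rfl⟩ := hyC
        rw [map_smul, smul_eq_mul, hconvzero hv, mul_zero]
      rw [map_neg, hfy, neg_zero] at hfu
      linarith
    -- Step 2: get an intrinsic interior point z
    obtain ⟨z, hz⟩ := Set.Nonempty.intrinsicInterior hconv ⟨0, h0C⟩
    obtain ⟨hzA, ε, hε, hball⟩ := mem_intrinsicInterior_iff_ball.1 hz
    have hzC : z ∈ C := intrinsicInterior_subset hz
    -- Step 3: approximate -z by c ∈ C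
    obtain ⟨c, hcC, hdc⟩ := Metric.mem_closure_iff.1 (hneg z hzC) (ε/2) (by linarith)
    have hcA : c ∈ affineSpan ℝ C := subset_affineSpan ℝ C hcC
    -- Step 4: ball 0 (ε/4) ∩ affineSpan ⊆ C
    rw [mem_intrinsicInterior_iff_ball]
    refine ⟨h0A, ε/4, by linarith, ?_⟩
    rintro x ⟨hxball, hxA⟩
    have hwA : (2:ℝ) • x - c ∈ affineSpan ℝ C := by
      have := AffineSubspace.smul_vsub_vadd_mem (affineSpan ℝ C) (2:ℝ) hxA hcA hcA
      simpa [vsub_eq_sub, vadd_eq_add, smul_sub, two_smul, sub_add] using this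
    have hwball : (2:ℝ) • x - c ∈ Metric.ball z ε := by
      rw [mem_ball, dist_eq_norm]
      rw [mem_ball, dist_eq_norm, sub_zero] at hxball
      rw [dist_eq_norm] at hdc
      have h1 : ‖(2:ℝ) • x - c - z‖ ≤ 2 * ‖x‖ + ‖-z - c‖ := by
        have heq : (2:ℝ) • x - c - z = (2:ℝ) • x + -(c - -z) := by abel
        rw [heq]
        calc ‖(2:ℝ) • x + -(c - -z)‖ ≤ ‖(2:ℝ) • x‖ + ‖-(c - -z)‖ := norm_add_le _ _
          _ = 2 * ‖x‖ + ‖c - -z‖ := by rw [norm_smul, norm_neg]; simp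
          _ = 2 * ‖x‖ + ‖-z - c‖ := by rw [norm_sub_rev]
      linarith
    have hwC : (2:ℝ) • x - c ∈ C := hball ⟨hwball, hwA⟩
    have hxeq : x = (1/2 : ℝ) • c + (1/2 : ℝ) • ((2:ℝ) • x - c) := by
      rw [smul_sub, smul_smul]; norm_num
    rw [hxeq]
    refine hconv hcC hwC ?_ ?_ ?_ <;> norm_num
  · -- 0 ∈ ri C → no-arbitrage
    intro hri H hpos y hy
    obtain ⟨-, ε, hε, hball⟩ := mem_intrinsicInterior_iff_ball.1 hri
    -- inner H is nonneg on C
    have hC0 : ∀ c ∈ C, 0 ≤ (inner ℝ H c : ℝ) := by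
      intro c hc
      rw [hC] at hc
      obtain ⟨v, hv, l, hl, rfl⟩ := hc
      have hvpos : 0 ≤ (inner ℝ H v : ℝ) := by
        have hsub : convexHull ℝ D ⊆ {x : EuclideanSpace ℝ (Fin d) | 0 ≤ (inner ℝ H x : ℝ)} :=
          convexHull_min hpos (convex_halfSpace_ge ((innerSL ℝ H).toLinearMap.isLinear) 0)
        exact hsub hv
      rw [inner_smul_right]
      exact mul_nonneg hl hvpos
    set t := ε / (2 * (‖y‖ + 1)) with hT
    have hynorm : (0:ℝ) < ‖y‖ + 1 := by positivity
    have ht : 0 < t := by positivity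
    have hyA : y ∈ affineSpan ℝ C := subset_affineSpan ℝ C (hDsub hy)
    have hmemA : -t • y ∈ affineSpan ℝ C := by
      have := AffineSubspace.smul_vsub_vadd_mem (affineSpan ℝ C) (-t) hyA h0A h0A
      simpa using this
    have hmemball : -t • y ∈ Metric.ball (0 : EuclideanSpace ℝ (Fin d)) ε := by
      rw [mem_ball, dist_zero_right, norm_smul]
      have h1 : ‖(-t : ℝ)‖ = t := by rw [Real.norm_eq_abs, abs_neg, abs_of_pos ht]
      rw [h1, hT]
      rw [div_mul_eq_mul_div, div_lt_iff₀ (by positivity)]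
      nlinarith [norm_nonneg y]
    have hmemC : -t • y ∈ C := hball ⟨hmemball, hmemA⟩
    have h1 : 0 ≤ (inner ℝ H (-t • y) : ℝ) := hC0 _ hmemC
    rw [inner_smul_right] at h1
    have h2 : 0 ≤ (inner ℝ H y : ℝ) := hpos y hy
    nlinarith
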